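/- Let f ∈ ℝ^n with f_i ≥ 0 for all i. Then TV(f) = ∫₀^∞ ( Σ_{(i,j) : f_i > t ≥ f_j} w_ij ) dt, i.e. the total variation of a nonnegative vector equals the integral over t ≥ 0 of the cut values of its super-level sets {i : f_i > t}. -/

import Mathlib

open Finset MeasureTheory

/-- Total variation `TV(f) = ½ Σ_{i,j} w_ij |f_i − f_j|`. -/
noncomputable def TV {n : ℕ} (W : Fin n → Fin n → ℝ) (f : Fin n → ℝ) : ℝ :=
  (1 / 2) * ∑ i, ∑ j, W i j * |f i - f j|

lemma coarea_if_eq_indicator (a b c : ℝ) :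
    (fun t : ℝ => if t < b ∧ a ≤ t then c else 0)
      = (Set.Ico a b).indicator (fun _ => c) := by
  funext t
  simp [Set.indicator, Set.mem_Ico, and_comm]

lemma coarea_integrable (a b c : ℝ) :
    IntegrableOn (fun t : ℝ => if t < b ∧ a ≤ t then c else 0) (Set.Ioi 0) := by
  rw [coarea_if_eq_indicator]
  refine Integrable.restrict ?_
  refine (integrable_indicator_iff measurableSet_Ico).2 ?_
  refine integrableOn_const ?_
  simp [Real.volume_Ico]

lemma coarea_single (a b c : ℝ) (ha : 0 ≤ a) :
    (∫ t in Set.Ioi (0:ℝ), (if t < b ∧ a ≤ t then c else 0))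
      = c * max (b - a) 0 := by
  rw [coarea_if_eq_indicator]
  rw [setIntegral_indicator measurableSet_Ico]
  rw [setIntegral_const]
  have hvol : volume (Set.Ioi 0 ∩ Set.Ico a b) = ENNReal.ofReal (b - a) := by
    apply le_antisymm
    · calc volume (Set.Ioi 0 ∩ Set.Ico a b) ≤ volume (Set.Ico a b) :=
            measure_mono Set.inter_subset_right
        _ = ENNReal.ofReal (b - a) := Real.volume_Ico
    · calc ENNReal.ofReal (b - a) = volume (Set.Ioo a b) := Real.volume_Ioo.symm
        _ ≤ volume (Set.Ioi 0 ∩ Set.Ico a b) := by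
            apply measure_mono
            intro t ht
            exact ⟨lt_of_le_of_lt ha ht.1, le_of_lt ht.1, ht.2⟩
  rw [measureReal_def, hvol]
  simp [ENNReal.toReal_ofReal', smul_eq_mul, mul_comm]

theorem coarea_formula (n : ℕ) (hn : 2 ≤ n)
    (W : Fin n → Fin n → ℝ)
    (hsym : ∀ i j, W i j = W j i) (hnonneg : ∀ i j, 0 ≤ W i j)
    (f : Fin n → ℝ) (hf : ∀ i, 0 ≤ f i) :
    TV W f = ∫ t in Set.Ioi (0 : ℝ),
      (∑ i, ∑ j, if t < f i ∧ f j ≤ t then W i j else 0) := by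
  have hcalc : (∫ t in Set.Ioi (0:ℝ), ∑ i, ∑ j, if t < f i ∧ f j ≤ t then W i j else 0)
      = ∑ i, ∑ j, W i j * max (f i - f j) 0 := by
    rw [integral_finset_sum _ (fun i _ =>
      integrable_finset_sum _ fun j _ => coarea_integrable (f j) (f i) (W i j))]
    refine Finset.sum_congr rfl fun i _ => ?_
    rw [integral_finset_sum _ (fun j _ => coarea_integrable (f j) (f i) (W i j))]
    exact Finset.sum_congr rfl fun j _ => coarea_single (f j) (f i) (W i j) (hf j)
  rw [hcalc, TV]
  have key : ∀ a : ℝ, |a| = max a 0 + max (-a) 0 := by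
    intro a
    rcases le_total 0 a with h | h
    · rw [abs_of_nonneg h, max_eq_left h, max_eq_right (neg_nonpos.2 h), add_zero]
    · rw [abs_of_nonpos h, max_eq_right h, max_eq_left (neg_nonneg.2 h), zero_add]
  have hswap : ∑ i, ∑ j, W i j * max (-(f i - f j)) 0
      = ∑ i, ∑ j, W i j * max (f i - f j) 0 := by
    rw [Finset.sum_comm]
    exact Finset.sum_congr rfl fun i _ => Finset.sum_congr rfl fun j _ => by
      rw [hsym j i, neg_sub]
  simp only [key, mul_add, Finset.sum_add_distrib]
  rw [hswap]
  ring
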